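/- Let d ≥ 2, let ℓ ≥ 0 be an integer, and let μ be a probability mass distribution on the d-ary tree T_d (a finitely supported function μ : V(T_d) → [0,∞) with total mass 1). If the average level M₁[μ] = Σ_{v} μ(v)·ℓ(v) satisfies M₁[μ] ≤ ℓ, then there exists a vertex v ∈ T_d with ℓ(v) ≤ ℓ and μ(v) ≥ d^{−(ℓ+1)} / 4, where ℓ(v) denotes the level of v, i.e., its graph distance from the root ρ. -/

import Mathlib

open scoped Classical

noncomputable section

/-- The infinite `d`-ary tree: vertices are finite words over an alphabet of size `d`
(the root is the empty word `[]`), and each vertex `u` is adjacent to its `d` children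
`i :: u` and (if `u ≠ []`) to its parent. Every vertex has exactly `d` children. -/
def daryTree (d : ℕ) : SimpleGraph (List (Fin d)) where
  Adj u v := (∃ i : Fin d, v = i :: u) ∨ (∃ i : Fin d, u = i :: v)
  symm := ⟨fun u v h => h.symm⟩
  loopless := ⟨by
    rintro u (⟨i, h⟩ | ⟨i, h⟩) <;>
      · have := congrArg List.length h
        simp at this⟩

noncomputable instance daryTree.locallyFinite (d : ℕ) (u : List (Fin d)) :
    Fintype ((daryTree d).neighborSet u) :=
  Set.Finite.fintype <| by
    apply Set.Finite.subset
      ((Set.finite_range fun i : Fin d => i :: u).union (Set.finite_singleton u.tail))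
    rintro v hv
    rcases (hv : (∃ i : Fin d, v = i :: u) ∨ (∃ i : Fin d, u = i :: v)) with ⟨i, h⟩ | ⟨i, h⟩
    · exact Or.inl ⟨i, h.symm⟩
    · right
      simp [h]


lemma daryTree_dist_root (d : ℕ) (v : List (Fin d)) :
    (daryTree d).dist [] v = v.length := by
  have hwalk : ∀ w : List (Fin d), ∃ p : (daryTree d).Walk w [], p.length = w.length := by
    intro w
    induction w with
    | nil => exact ⟨.nil, rfl⟩
    | cons i w ih =>
      obtain ⟨p, hp⟩ := ih
      exact ⟨.cons (Or.inr ⟨i, rfl⟩) p, by exact congrArg (· + 1) hp⟩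
  obtain ⟨p, hp⟩ := hwalk v
  have hreach : (daryTree d).Reachable [] v := ⟨p.reverse⟩
  have hub : (daryTree d).dist [] v ≤ v.length := by
    rw [SimpleGraph.dist_comm]
    exact hp ▸ SimpleGraph.dist_le p
  have hlb : ∀ (u w : List (Fin d)) (q : (daryTree d).Walk u w),
      (w.length : ℤ) ≤ (q.length : ℤ) + u.length := by
    intro u w q
    induction q with
    | nil => simp
    | @cons a b cc h q ih =>
      have hb : b.length ≤ a.length + 1 := by
        rcases h with ⟨i, h'⟩ | ⟨i, h'⟩
        · have := congrArg List.length h'; simp at this; omega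
        · have := congrArg List.length h'; simp at this; omega
      simp only [SimpleGraph.Walk.length_cons]
      push_cast
      omega
  obtain ⟨q, hq⟩ := hreach.exists_walk_length_eq_dist
  have := hlb [] v q
  rw [hq] at this
  simp at this
  omega

/-- Padding map: a word of length `≤ j` is encoded as a function `Fin (j+1) → Fin d`. -/
def padFun (d j : ℕ) (hd : 2 ≤ d) (v : List (Fin d)) : Fin (j+1) → Fin d := fun i =>
  if h : (i : ℕ) < v.length then v.get ⟨i, h⟩
  else if (i : ℕ) = v.length then ⟨1, by omega⟩ else ⟨0, by omega⟩

lemma padFun_inj (d j : ℕ) (hd : 2 ≤ d) (v w : List (Fin d))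
    (hv : v.length ≤ j) (hw : w.length ≤ j)
    (h : padFun d j hd v = padFun d j hd w) : v = w := by
  have key : ∀ (a b : List (Fin d)), a.length ≤ j → b.length ≤ j →
      padFun d j hd a = padFun d j hd b → ¬ a.length < b.length := by
    intro a b ha hb hab hlt
    have h1 := congrFun hab ⟨b.length, by omega⟩
    simp only [padFun, Fin.val_mk] at h1
    rw [dif_neg (by omega), if_neg (by omega), dif_neg (by omega)] at h1
    simp [Fin.ext_iff] at h1
  have hlen : v.length = w.length := by
    rcases Nat.lt_trichotomy v.length w.length with h' | h' | h'
    · exact absurd h' (key v w hv hw h)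
    · exact h'
    · exact absurd h' (key w v hw hv h.symm)
  refine List.ext_get hlen ?_
  intro i h1 h2
  have := congrFun h ⟨i, by omega⟩
  simp only [padFun] at this
  rw [dif_pos (by simpa using h1), dif_pos (by simpa using h2)] at this
  exact this

lemma geo_bound (d : ℕ) (hd : 2 ≤ d) (n : ℕ) :
    ∑ j ∈ Finset.range (n+1), (d : ℝ) ^ (j+1) ≤ 2 * (d : ℝ) ^ (n+1) := by
  have hd2 : (2 : ℝ) ≤ (d : ℝ) := by exact_mod_cast hd
  induction n with
  | zero => simp; nlinarith
  | succ n ih =>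
    rw [Finset.sum_range_succ]
    have hp : (0 : ℝ) ≤ (d : ℝ) ^ (n+1) := by positivity
    have : 2 * (d : ℝ) ^ (n+1) ≤ (d : ℝ) ^ (n+2) := by
      calc 2 * (d : ℝ) ^ (n+1) ≤ (d : ℝ) * (d : ℝ) ^ (n+1) :=
            mul_le_mul_of_nonneg_right hd2 hp
        _ = (d : ℝ) ^ (n+2) := by ring
    nlinarith

/-- **Existence of a large mass at low levels** (Florescu–Peres–Rácz, Lemma 6.2).
Let `d ≥ 2` and let `μ` be a probability mass distribution on the `d`-ary tree (nonnegative,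
finitely supported, total mass `1`). If the average level `M₁[μ] = ∑_v μ(v)·ℓ(v)` is at most `ℓ`,
where `ℓ(v)` is the graph distance of `v` from the root, then some vertex `v` at level at most
`ℓ` carries mass at least `d^{-(ℓ+1)}/4`. -/
theorem exists_large_mass_dary_tree (d : ℕ) (hd : 2 ≤ d) (ℓ : ℕ)
    (μ : List (Fin d) → ℝ) (hnonneg : ∀ v, 0 ≤ μ v) (hfin : (Function.support μ).Finite)
    (htotal : ∑' v : List (Fin d), μ v = 1)
    (havg : ∑' v : List (Fin d), μ v * ((daryTree d).dist [] v : ℝ) ≤ (ℓ : ℝ)) :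
    ∃ v : List (Fin d), (daryTree d).dist [] v ≤ ℓ ∧
      ((d : ℝ) ^ (ℓ + 1))⁻¹ / 4 ≤ μ v := by
  classical
  by_contra hcon
  push_neg at hcon
  set c : ℝ := ((d : ℝ) ^ (ℓ + 1))⁻¹ / 4 with hc
  set F := hfin.toFinset with hF
  have hzero : ∀ v ∉ F, μ v = 0 := by
    intro v hv
    by_contra h
    exact hv (by simp [hF, Function.mem_support, h])
  have h1 : ∑ v ∈ F, μ v = 1 := by
    rw [← htotal]; exact (tsum_eq_sum hzero).symm
  have h2 : ∑ v ∈ F, μ v * (v.length : ℝ) ≤ (ℓ : ℝ) := by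
    have heq : ∑' v : List (Fin d), μ v * ((daryTree d).dist [] v : ℝ)
        = ∑ v ∈ F, μ v * ((daryTree d).dist [] v : ℝ) :=
      tsum_eq_sum (fun v hv => by rw [hzero v hv]; ring)
    rw [heq] at havg
    calc ∑ v ∈ F, μ v * (v.length : ℝ)
        = ∑ v ∈ F, μ v * ((daryTree d).dist [] v : ℝ) :=
          Finset.sum_congr rfl fun v _ => by rw [daryTree_dist_root]
      _ ≤ (ℓ : ℝ) := havg
  have hsmall : ∀ v : List (Fin d), v.length ≤ ℓ → μ v ≤ c := by
    intro v hv
    exact le_of_lt (hcon v (by rw [daryTree_dist_root]; exact hv))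
  have hdpos : (0 : ℝ) < d := by positivity
  -- cardinality bound
  have hcard : ∀ j : ℕ, ((F.filter fun v => v.length ≤ j).card : ℝ) ≤ (d : ℝ) ^ (j+1) := by
    intro j
    have hinj : Set.InjOn (padFun d j hd) (F.filter fun v => v.length ≤ j) := by
      intro v hv w hw hvw
      simp only [Finset.coe_filter, Set.mem_setOf_eq] at hv hw
      exact padFun_inj d j hd v w hv.2 hw.2 hvw
    have := Finset.card_le_card_of_injOn (padFun d j hd)
      (fun v _ => Finset.mem_univ _) hinj
    have hcardu : (Finset.univ : Finset (Fin (j+1) → Fin d)).card = d ^ (j+1) := by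
      simp [Finset.card_univ]
    rw [hcardu] at this
    exact_mod_cast this
  have hfilter_sum : ∀ j ≤ ℓ, ∑ v ∈ F.filter (fun v => v.length ≤ j), μ v
      ≤ c * (d : ℝ) ^ (j+1) := by
    intro j hj
    have hle : ∑ v ∈ F.filter (fun v => v.length ≤ j), μ v
        ≤ (F.filter (fun v => v.length ≤ j)).card • c := by
      apply Finset.sum_le_card_nsmul
      intro v hv
      exact hsmall v (le_trans (Finset.mem_filter.mp hv).2 hj)
    rw [nsmul_eq_mul] at hle
    have hcpos : (0 : ℝ) ≤ c := by positivity
    calc ∑ v ∈ F.filter (fun v => v.length ≤ j), μ v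
        ≤ ((F.filter (fun v => v.length ≤ j)).card : ℝ) * c := hle
      _ ≤ (d : ℝ) ^ (j+1) * c := mul_le_mul_of_nonneg_right (hcard j) hcpos
      _ = c * (d : ℝ) ^ (j+1) := mul_comm _ _
  -- tail mass lower bound
  have hT : ∀ j ≤ ℓ, 1 - c * (d : ℝ) ^ (j+1)
      ≤ ∑ v ∈ F, (if j < v.length then μ v else 0) := by
    intro j hj
    have hsplit := Finset.sum_filter_add_sum_filter_not F (fun v => v.length ≤ j) μ
    have heq : ∑ v ∈ F, (if j < v.length then μ v else 0)
        = ∑ v ∈ F.filter (fun v => ¬ v.length ≤ j), μ v := by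
      rw [Finset.sum_filter]
      exact Finset.sum_congr rfl fun v _ => by simp [Nat.not_le]
    rw [heq]
    have := hfilter_sum j hj
    rw [h1] at hsplit
    linarith
  -- swap sums
  have hswap : ∑ j ∈ Finset.range (ℓ+1), ∑ v ∈ F, (if j < v.length then μ v else 0)
      ≤ ∑ v ∈ F, μ v * (v.length : ℝ) := by
    rw [Finset.sum_comm]
    apply Finset.sum_le_sum
    intro v _
    rw [← Finset.sum_filter]
    have hsub : (Finset.range (ℓ+1)).filter (fun j => j < v.length)
        ⊆ Finset.range v.length := by
      intro j hj
      simp only [Finset.mem_filter, Finset.mem_range] at hj ⊢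
      exact hj.2
    have hcardle : ((Finset.range (ℓ+1)).filter (fun j => j < v.length)).card ≤ v.length := by
      simpa using Finset.card_le_card hsub
    rw [Finset.sum_const, nsmul_eq_mul]
    calc (((Finset.range (ℓ+1)).filter (fun j => j < v.length)).card : ℝ) * μ v
        ≤ (v.length : ℝ) * μ v :=
          mul_le_mul_of_nonneg_right (by exact_mod_cast hcardle) (hnonneg v)
      _ = μ v * (v.length : ℝ) := mul_comm _ _
  -- lower bound on the double sum
  have hlow : (ℓ : ℝ) + 1 - c * (2 * (d : ℝ) ^ (ℓ+1))
      ≤ ∑ j ∈ Finset.range (ℓ+1), ∑ v ∈ F, (if j < v.length then μ v else 0) := by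
    have hA : ∑ j ∈ Finset.range (ℓ+1), (1 - c * (d : ℝ) ^ (j+1))
        ≤ ∑ j ∈ Finset.range (ℓ+1), ∑ v ∈ F, (if j < v.length then μ v else 0) :=
      Finset.sum_le_sum fun j hj => hT j (by
        have := Finset.mem_range.mp hj; omega)
    have hB : ∑ j ∈ Finset.range (ℓ+1), (1 - c * (d : ℝ) ^ (j+1))
        = (ℓ+1 : ℝ) - c * ∑ j ∈ Finset.range (ℓ+1), (d : ℝ) ^ (j+1) := by
      rw [Finset.sum_sub_distrib, Finset.sum_const, Finset.card_range, ← Finset.mul_sum]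
      ring
    have hgeo := geo_bound d hd ℓ
    have hcpos : (0 : ℝ) ≤ c := by positivity
    nlinarith [mul_le_mul_of_nonneg_left hgeo hcpos]
  have hchalf : c * (2 * (d : ℝ) ^ (ℓ+1)) = 1/2 := by
    rw [hc]
    field_simp
    ring
  rw [hchalf] at hlow
  linarith

end
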